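/- Under the spherical mixture model, the third moment tensor satisfies E[X⊗X⊗X] = Σ_k w_k μ_k⊗μ_k⊗μ_k + Σ_{i=1}^M (m₁⊗e_i⊗e_i + e_i⊗m₁⊗e_i + e_i⊗e_i⊗m₁) + Σ_{i=1}^M γ̄_i · e_i⊗e_i⊗e_i, where m₁ = Σ_k w_k σ_k² μ_k and γ̄_i = Σ_k w_k γ_i^(k) is the averaged coordinate-wise third central moment. -/

import Mathlib

open MeasureTheory

/-- Under the spherical mixture model `P = ∑ k, w k • ν k` (component means `μk k`,
within-component independent coordinates with variance `σ2 k` and coordinate-wise third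
central moments `γ k`), the third moment tensor satisfies, entrywise at `(i, j, l)`:
`E[X⊗X⊗X] = ∑ k, w k μk⊗μk⊗μk + ∑ s (m₁⊗e_s⊗e_s + e_s⊗m₁⊗e_s + e_s⊗e_s⊗m₁)
+ ∑ s γ̄_s e_s⊗e_s⊗e_s`, where `m₁ = ∑ k, w k σ2 k • μk k` and `γ̄ = ∑ k, w k • γ k`. -/
theorem mixture_third_moment {M K : ℕ}
    (w : Fin K → ℝ) (hw : ∀ k, 0 ≤ w k) (hw1 : ∑ k, w k = 1)
    (μk : Fin K → Fin M → ℝ) (σ2 : Fin K → ℝ) (hσ2 : ∀ k, 0 ≤ σ2 k)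
    (γ : Fin K → Fin M → ℝ)
    (ν : Fin K → Measure (Fin M → ℝ)) (hprob : ∀ k, IsProbabilityMeasure (ν k))
    (hint1 : ∀ k i, Integrable (fun x => x i) (ν k))
    (hint2 : ∀ k i j, Integrable (fun x => x i * x j) (ν k))
    (hint3 : ∀ k i j l, Integrable (fun x => x i * x j * x l) (ν k))
    (hmean : ∀ k i, ∫ x, x i ∂(ν k) = μk k i)
    (hcov : ∀ k i j, ∫ x, (x i - μk k i) * (x j - μk k j) ∂(ν k) =
      if i = j then σ2 k else 0)
    (hthird : ∀ k i j l,
      ∫ x, (x i - μk k i) * (x j - μk k j) * (x l - μk k l) ∂(ν k) =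
        if i = j ∧ j = l then γ k i else 0)
    (P : Measure (Fin M → ℝ)) (hP : P = ∑ k, ENNReal.ofReal (w k) • ν k)
    (m₁ : Fin M → ℝ) (hm₁ : ∀ i, m₁ i = ∑ k, w k * σ2 k * μk k i)
    (γbar : Fin M → ℝ) (hγbar : ∀ i, γbar i = ∑ k, w k * γ k i) :
    ∀ i j l, ∫ x, x i * x j * x l ∂P =
      (∑ k, w k * (μk k i * μk k j * μk k l)) +
        (if j = l then m₁ i else 0) + (if i = l then m₁ j else 0) +
        (if i = j then m₁ l else 0) +
        (if i = j ∧ j = l then γbar i else 0) := by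
  intro i j l
  have h2 : ∀ k (i j : Fin M), ∫ x, x i * x j ∂(ν k) =
      (if i = j then σ2 k else 0) + μk k i * μk k j := by
    intro k i j
    have := hprob k
    set a := μk k i with ha
    set b := μk k j with hb
    have hC := hcov k i j
    have hexp : (fun x : Fin M → ℝ => (x i - a) * (x j - b)) =
        fun x => x i * x j - a * x j - b * x i + a * b := by
      funext x; ring
    rw [hexp] at hC
    have J2 : Integrable (fun x : Fin M → ℝ => x i * x j - a * x j) (ν k) :=
      (hint2 k i j).sub ((hint1 k j).const_mul a)
    have J1 : Integrable (fun x : Fin M → ℝ => x i * x j - a * x j - b * x i) (ν k) :=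
      J2.sub ((hint1 k i).const_mul b)
    rw [integral_add J1 (integrable_const _),
        integral_sub J2 ((hint1 k i).const_mul b),
        integral_sub (hint2 k i j) ((hint1 k j).const_mul a),
        integral_const_mul _ _, integral_const_mul _ _, hmean, hmean,
        integral_const, probReal_univ] at hC
    simp only [ENNReal.toReal_one, smul_eq_mul, one_mul] at hC
    linarith
  have h3 : ∀ k : Fin K, ∫ x, x i * x j * x l ∂(ν k) =
      μk k i * μk k j * μk k l +
      (if j = l then σ2 k * μk k i else 0) +
      (if i = l then σ2 k * μk k j else 0) +
      (if i = j then σ2 k * μk k l else 0) +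
      (if i = j ∧ j = l then γ k i else 0) := by
    intro k
    have := hprob k
    set a := μk k i with ha
    set b := μk k j with hb
    set c := μk k l with hc
    have hT := hthird k i j l
    have hexp : (fun x : Fin M → ℝ => (x i - a) * (x j - b) * (x l - c)) =
        fun x => ((((((x i * x j * x l - a * (x j * x l)) - b * (x i * x l))
          - c * (x i * x j)) + (a * b) * x l) + (a * c) * x j) + (b * c) * x i)
          - a * b * c := by
      funext x; ring
    rw [hexp] at hT
    have K3 : Integrable (fun x : Fin M → ℝ =>
        x i * x j * x l - a * (x j * x l)) (ν k) :=
      (hint3 k i j l).sub ((hint2 k j l).const_mul a)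
    have K2 : Integrable (fun x : Fin M → ℝ =>
        x i * x j * x l - a * (x j * x l) - b * (x i * x l)) (ν k) :=
      K3.sub ((hint2 k i l).const_mul b)
    have I1 : Integrable (fun x : Fin M → ℝ =>
        (((x i * x j * x l - a * (x j * x l)) - b * (x i * x l))
          - c * (x i * x j))) (ν k) :=
      K2.sub ((hint2 k i j).const_mul c)
    have I2 : Integrable (fun x : Fin M → ℝ =>
        ((((x i * x j * x l - a * (x j * x l)) - b * (x i * x l))
          - c * (x i * x j)) + (a * b) * x l)) (ν k) :=
      I1.add ((hint1 k l).const_mul _)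
    have I3 : Integrable (fun x : Fin M → ℝ =>
        (((((x i * x j * x l - a * (x j * x l)) - b * (x i * x l))
          - c * (x i * x j)) + (a * b) * x l) + (a * c) * x j)) (ν k) :=
      I2.add ((hint1 k j).const_mul _)
    have I4 : Integrable (fun x : Fin M → ℝ =>
        ((((((x i * x j * x l - a * (x j * x l)) - b * (x i * x l))
          - c * (x i * x j)) + (a * b) * x l) + (a * c) * x j) + (b * c) * x i))
        (ν k) := I3.add ((hint1 k i).const_mul _)
    rw [integral_sub I4 (integrable_const _),
        integral_add I3 ((hint1 k i).const_mul _),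
        integral_add I2 ((hint1 k j).const_mul _),
        integral_add I1 ((hint1 k l).const_mul _),
        integral_sub K2 ((hint2 k i j).const_mul c),
        integral_sub K3 ((hint2 k i l).const_mul b),
        integral_sub (hint3 k i j l) ((hint2 k j l).const_mul a),
        integral_const_mul _ _, integral_const_mul _ _, integral_const_mul _ _,
        integral_const_mul _ _, integral_const_mul _ _, integral_const_mul _ _,
        h2 k j l, h2 k i l, h2 k i j, hmean, hmean, hmean,
        integral_const, probReal_univ] at hT
    simp only [ENNReal.toReal_one, smul_eq_mul, one_mul, ← ha, ← hb, ← hc] at hT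
    split_ifs at hT ⊢ <;> linarith
  have hPint : ∫ x, x i * x j * x l ∂P =
      ∑ k, w k * ∫ x, x i * x j * x l ∂(ν k) := by
    rw [hP, integral_finset_sum_measure]
    · refine Finset.sum_congr rfl fun k _ => ?_
      rw [integral_smul_measure, ENNReal.toReal_ofReal (hw k), smul_eq_mul]
    · intro k _
      exact (hint3 k i j l).smul_measure ENNReal.ofReal_ne_top
  rw [hPint]
  have e1 : (if j = l then m₁ i else 0) = ∑ k, (if j = l then w k * (σ2 k * μk k i) else 0) := by
    split_ifs with h
    · rw [hm₁]; exact Finset.sum_congr rfl fun k _ => by ring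
    · simp
  have e2 : (if i = l then m₁ j else 0) = ∑ k, (if i = l then w k * (σ2 k * μk k j) else 0) := by
    split_ifs with h
    · rw [hm₁]; exact Finset.sum_congr rfl fun k _ => by ring
    · simp
  have e3 : (if i = j then m₁ l else 0) = ∑ k, (if i = j then w k * (σ2 k * μk k l) else 0) := by
    split_ifs with h
    · rw [hm₁]; exact Finset.sum_congr rfl fun k _ => by ring
    · simp
  have e4 : (if i = j ∧ j = l then γbar i else 0) = ∑ k, (if i = j ∧ j = l then w k * γ k i else 0) := by
    split_ifs with h
    · rw [hγbar]
    · simp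
  rw [e1, e2, e3, e4, ← Finset.sum_add_distrib, ← Finset.sum_add_distrib,
      ← Finset.sum_add_distrib, ← Finset.sum_add_distrib]
  refine Finset.sum_congr rfl fun k _ => ?_
  rw [h3 k]
  split_ifs <;> ring
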